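/- arXiv:1108.3253 — 3 statements merged into one kernel-verified Lean document; each statement's English description precedes it below -/
import Mathlib

section
/- Let x₀ ∈ X and let S be a basis of open neighborhoods of x₀, directed by reverse inclusion. Suppose for each V ∈ S, α_V : [0,1] → X is a path with α_V(0) = x₀ and image contained in V. Then the induced wedge map α : ⋁_{V∈S}(I_V, 0) → X from the arc-hedgehog over S to X is continuous. -/
open unitInterval Topology

set_option linter.unnecessarySimpa false

universe u v w

/-- `p : E → B` is an arc-covering: unique lifting of paths given the initial point. -/
def IsArcCovering {E : Type*} {B : Type*} [TopologicalSpace E] [TopologicalSpace B]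
    (p : C(E, B)) : Prop :=
  ∀ (e₀ : E) (f : C(I, B)), f 0 = p e₀ →
    ∃! g : C(I, E), p.comp g = f ∧ g 0 = e₀

/-- The relation identifying the wedge points of a wedge of copies of `(A, a₀)` indexed by `S`. -/
def wedgeRel (S A : Type*) (a₀ : A) (x y : S × A) : Prop :=
  x = y ∨ (x.2 = a₀ ∧ y.2 = a₀)

/-- The wedge (one-point union) of copies of `(A, a₀)` indexed by `S`. -/
def Wedge (S A : Type*) (a₀ : A) : Type _ :=
  Quot (wedgeRel S A a₀)

/-- The topology of a directed wedge: a set is open iff its trace on each copy of `A`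
is open, and if it contains the wedge point then it contains all copies of `A`
beyond some index. -/
instance Wedge.instTopologicalSpace (S A : Type*) (a₀ : A) [Preorder S]
    [IsDirected S (· ≤ ·)] [TopologicalSpace A] : TopologicalSpace (Wedge S A a₀) where
  IsOpen U := (∀ s : S, IsOpen {a : A | Quot.mk (wedgeRel S A a₀) (s, a) ∈ U}) ∧
    ((∃ s : S, Quot.mk (wedgeRel S A a₀) (s, a₀) ∈ U) →
      ∃ t : S, ∀ s : S, t < s → ∀ a : A, Quot.mk (wedgeRel S A a₀) (s, a) ∈ U)
  isOpen_univ := by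
    refine ⟨fun s => ?_, fun h => ?_⟩
    · exact (isOpen_univ (X := A))
    · obtain ⟨s, -⟩ := h
      exact ⟨s, fun _ _ _ => trivial⟩
  isOpen_inter := by
    rintro U V ⟨hU1, hU2⟩ ⟨hV1, hV2⟩
    refine ⟨fun s => (hU1 s).inter (hV1 s), fun h => ?_⟩
    obtain ⟨tU, htU⟩ := hU2 ⟨h.choose, h.choose_spec.1⟩
    obtain ⟨tV, htV⟩ := hV2 ⟨h.choose, h.choose_spec.2⟩
    obtain ⟨t, ht1, ht2⟩ := directed_of (· ≤ ·) tU tV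
    exact ⟨t, fun s hs a => ⟨htU s (lt_of_le_of_lt ht1 hs) a, htV s (lt_of_le_of_lt ht2 hs) a⟩⟩
  isOpen_sUnion := by
    intro C hC
    constructor
    · intro s
      have : {a : A | Quot.mk (wedgeRel S A a₀) (s, a) ∈ ⋃₀ C} =
          ⋃ U ∈ C, {a : A | Quot.mk (wedgeRel S A a₀) (s, a) ∈ U} := by
        ext a
        simp only [Set.mem_setOf_eq, Set.mem_sUnion, Set.mem_iUnion, exists_prop]
        exact Iff.rfl
      rw [this]
      exact isOpen_biUnion fun U hU => (hC U hU).1 s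
    · rintro ⟨s, hs⟩
      obtain ⟨U, hUC, hsU⟩ := hs
      obtain ⟨t, ht⟩ := (hC U hUC).2 ⟨s, hsU⟩
      exact ⟨t, fun s' hs' a => ⟨U, hUC, ht s' hs' a⟩⟩

/-- An arc-hedgehog over a directed set `S`: the directed wedge of copies of `([0,1], 0)`. -/
def ArcHedgehog (S : Type*) : Type _ := Wedge S I 0

instance (S : Type*) [Preorder S] [IsDirected S (· ≤ ·)] : TopologicalSpace (ArcHedgehog S) :=
  Wedge.instTopologicalSpace S I 0

/-- `p` is an arc-hedgehog covering: maps from arc-hedgehogs lift uniquely. -/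
def IsArcHedgehogCovering {E : Type*} {B : Type*} [TopologicalSpace E] [TopologicalSpace B]
    (p : C(E, B)) : Prop :=
  ∀ (S : Type u) [Preorder S] [IsDirected S (· ≤ ·)],
    ∀ (e₀ : E) (f : C(ArcHedgehog S, B)) (z₀ : ArcHedgehog S), f z₀ = p e₀ →
      ∃! g : C(ArcHedgehog S, E), p.comp g = f ∧ g z₀ = e₀

/-- The closed unit `2`-disk. -/
noncomputable def Disk : Type := Metric.closedBall (0 : EuclideanSpace ℝ (Fin 2)) 1

noncomputable instance : TopologicalSpace Disk := by unfold Disk; infer_instance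

/-- The center of the disk. -/
noncomputable def Disk.center : Disk := ⟨0, by simp⟩

/-- A disk-hedgehog over a directed set `S`: the directed wedge of copies of the pointed disk. -/
def DiskHedgehog (S : Type*) : Type _ := Wedge S Disk Disk.center

noncomputable instance (S : Type*) [Preorder S] [IsDirected S (· ≤ ·)] : TopologicalSpace (DiskHedgehog S) :=
  Wedge.instTopologicalSpace S Disk Disk.center

/-- `p` is a disk-hedgehog covering: maps from disk-hedgehogs lift uniquely. -/
def IsDiskHedgehogCovering {E : Type*} {B : Type*} [TopologicalSpace E] [TopologicalSpace B]
    (p : C(E, B)) : Prop :=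
  ∀ (S : Type u) [Preorder S] [IsDirected S (· ≤ ·)],
    ∀ (e₀ : E) (f : C(DiskHedgehog S, B)) (z₀ : DiskHedgehog S), f z₀ = p e₀ →
      ∃! g : C(DiskHedgehog S, E), p.comp g = f ∧ g z₀ = e₀

/-- `p` is a disk-covering: maps from the closed `2`-disk lift uniquely. -/
def IsDiskCovering {E : Type*} {B : Type*} [TopologicalSpace E] [TopologicalSpace B]
    (p : C(E, B)) : Prop :=
  ∀ (e₀ : E) (f : C(Disk, B)) (d₀ : Disk), f d₀ = p e₀ →
    ∃! g : C(Disk, E), p.comp g = f ∧ g d₀ = e₀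

/-- Path components of preimages of neighborhoods form a neighborhood basis of the
total space. -/
def HedgehogBasisCondition {E : Type*} {B : Type*} [TopologicalSpace E] [TopologicalSpace B]
    (p : C(E, B)) : Prop :=
  ∀ (e₀ : E) (U : Set E), IsOpen U → e₀ ∈ U →
    ∃ V ∈ 𝓝 (p e₀), {y : E | JoinedIn (p ⁻¹' V) e₀ y} ⊆ U

/-- The monodromy relation on loops at `b₀`: two loops are identified iff any two of
their lifts starting at the same point end at the same point. -/
def MonodromyRel {E : Type*} {B : Type*} [TopologicalSpace E] [TopologicalSpace B]
    (p : C(E, B)) (b₀ : B) (α β : Path b₀ b₀) : Prop :=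
  ∀ g h : C(I, E), (∀ t, p (g t) = α t) → (∀ t, p (h t) = β t) →
    g 0 = h 0 → g 1 = h 1

/-- `p` is regular: for each loop in `B`, all lifts are loops or all lifts are non-loops. -/
def IsRegularCovering {E : Type*} {B : Type*} [TopologicalSpace E] [TopologicalSpace B]
    (p : C(E, B)) : Prop :=
  ∀ (b : B) (α : Path b b) (g h : C(I, E)),
    (∀ t, p (g t) = α t) → (∀ t, p (h t) = α t) → g 0 = g 1 → h 0 = h 1

lemma wedge_lift_wd {X : Type*} [TopologicalSpace X] (S' : Type*) (x₀ : X) (α : S' → C(I, X))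
    (h0 : ∀ s, α s 0 = x₀) :
    ∀ a b : S' × I, wedgeRel S' I 0 a b → α a.1 a.2 = α b.1 b.2 := by
  rintro ⟨s, t⟩ ⟨s', t'⟩ (h | ⟨h1, h2⟩)
  · cases h; rfl
  · simp only at h1 h2
    rw [h1, h2, h0, h0]

lemma basis_isDirected {X : Type*} [TopologicalSpace X] (x₀ : X) (S : Set (Set X))
    (hS : ∀ V ∈ S, IsOpen V ∧ x₀ ∈ V)
    (hbasis : ∀ U : Set X, IsOpen U → x₀ ∈ U → ∃ V ∈ S, V ⊆ U) :
    IsDirected (↥S)ᵒᵈ (· ≤ ·) := by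
  constructor
  rintro V W
  obtain ⟨Z, hZS, hZ⟩ := hbasis ((↑(OrderDual.ofDual V) : Set X) ∩ ↑(OrderDual.ofDual W))
    (((hS _ (OrderDual.ofDual V).2).1).inter ((hS _ (OrderDual.ofDual W).2).1))
    ⟨(hS _ (OrderDual.ofDual V).2).2, (hS _ (OrderDual.ofDual W).2).2⟩
  refine ⟨OrderDual.toDual ⟨Z, hZS⟩, ?_, ?_⟩
  · exact fun x hx => (hZ hx).1
  · exact fun x hx => (hZ hx).2

/-- a family of paths starting at `x₀` indexed by a neighborhood basis of
`x₀` (directed by reverse inclusion), with `α_V` contained in `V`, induces a continuous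
wedge map from the arc-hedgehog over the basis. -/
theorem hedgehog_wedge_map_continuous {X : Type u} [TopologicalSpace X] (x₀ : X)
    (S : Set (Set X))
    (hS : ∀ V ∈ S, IsOpen V ∧ x₀ ∈ V)
    (hbasis : ∀ U : Set X, IsOpen U → x₀ ∈ U → ∃ V ∈ S, V ⊆ U)
    (α : ↥S → C(I, X))
    (h0 : ∀ V, α V 0 = x₀)
    (hin : ∀ (V : ↥S) (t : I), α V t ∈ (V : Set X)) :
    haveI : IsDirected (↥S)ᵒᵈ (· ≤ ·) := basis_isDirected x₀ S hS hbasis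
    Continuous (fun z : ArcHedgehog (↥S)ᵒᵈ =>
      Quot.lift (fun q : (↥S)ᵒᵈ × I => α (OrderDual.ofDual q.1) q.2)
        (wedge_lift_wd (↥S)ᵒᵈ x₀ (fun s => α (OrderDual.ofDual s))
          (fun s => h0 (OrderDual.ofDual s))) z) := by
  haveI : IsDirected (↥S)ᵒᵈ (· ≤ ·) := basis_isDirected x₀ S hS hbasis
  rw [continuous_def]
  intro U hU
  refine ⟨fun s => ?_, ?_⟩
  · exact (α (OrderDual.ofDual s)).continuous.isOpen_preimage U hU
  · rintro ⟨s, hs⟩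
    replace hs := Set.mem_preimage.mp hs
    have hx0 : x₀ ∈ U := by
      have := h0 (OrderDual.ofDual s)
      simpa [this] using hs
    obtain ⟨V, hVS, hVU⟩ := hbasis U hU hx0
    refine ⟨OrderDual.toDual ⟨V, hVS⟩, fun s' hs' a => ?_⟩
    have hsub : (↑(OrderDual.ofDual s') : Set X) ⊆ V := le_of_lt hs'
    exact Set.mem_preimage.mpr (hVU (hsub (hin _ a)))
end

section
/- Let p : E → B be an arc-covering. Then p is an arc-hedgehog covering if and only if for every e₀ ∈ E and every open U ⊆ E containing e₀, there exists a neighborhood V of p(e₀) in B such that the path component of p⁻¹(V) containing e₀ is contained in U. -/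
open unitInterval Topology

set_option linter.unnecessarySimpa false

universe u v w

namespace HedgehogAux

noncomputable def segMap (a b : I) : C(I, I) where
  toFun u := ⟨(1 - u.1) * a.1 + u.1 * b.1, by
    have ha1 := a.2.1; have ha2 := a.2.2
    have hb1 := b.2.1; have hb2 := b.2.2
    have hu1 := u.2.1; have hu2 := u.2.2
    constructor
    · nlinarith
    · nlinarith⟩
  continuous_toFun := by
    apply Continuous.subtype_mk
    fun_prop

@[simp] lemma segMap_zero (a b : I) : segMap a b 0 = a := by
  apply Subtype.ext; simp [segMap]

@[simp] lemma segMap_one (a b : I) : segMap a b 1 = b := by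
  apply Subtype.ext; simp [segMap]

lemma lift_unique_pt {E B : Type*} [TopologicalSpace E] [TopologicalSpace B] {p : C(E, B)}
    (hp : IsArcCovering p) {f : C(I, B)} {g h : C(I, E)} (hg : p.comp g = f)
    (hh : p.comp h = f) {t₀ : I} (he : g t₀ = h t₀) : g = h := by
  ext t
  have h0 : (f.comp (segMap t₀ t)) 0 = p (g t₀) := by
    simp [← hg]
  obtain ⟨k, -, huniq⟩ := hp (g t₀) (f.comp (segMap t₀ t)) h0
  have h1 : g.comp (segMap t₀ t) = k :=
    huniq _ ⟨by rw [← ContinuousMap.comp_assoc, hg], by simp⟩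
  have h2 : h.comp (segMap t₀ t) = k :=
    huniq _ ⟨by rw [← ContinuousMap.comp_assoc, hh], by simp [← he]⟩
  have h3 := h1.trans h2.symm
  calc g t = (g.comp (segMap t₀ t)) 1 := by simp
    _ = (h.comp (segMap t₀ t)) 1 := by rw [h3]
    _ = h t := by simp

lemma isOpen_hh_iff {S : Type*} [Preorder S] [IsDirected S (· ≤ ·)] {U : Set (ArcHedgehog S)} :
    IsOpen U ↔ (∀ s : S, IsOpen {a : I | Quot.mk (wedgeRel S I 0) (s, a) ∈ U}) ∧
      ((∃ s : S, Quot.mk (wedgeRel S I 0) (s, 0) ∈ U) →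
        ∃ t : S, ∀ s : S, t < s → ∀ a : I, Quot.mk (wedgeRel S I 0) (s, a) ∈ U) := Iff.rfl

lemma mk_zero_eq {S : Type*} (s s' : S) :
    Quot.mk (wedgeRel S I 0) (s, 0) = Quot.mk (wedgeRel S I 0) (s', 0) :=
  Quot.sound (Or.inr ⟨rfl, rfl⟩)

def incl {S : Type*} [Preorder S] [IsDirected S (· ≤ ·)] (s : S) : C(I, ArcHedgehog S) where
  toFun t := Quot.mk (wedgeRel S I 0) (s, t)
  continuous_toFun := by
    apply continuous_def.mpr
    intro U hU
    exact (isOpen_hh_iff.mp hU).1 s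

@[simp] lemma incl_apply {S : Type*} [Preorder S] [IsDirected S (· ≤ ·)] (s : S) (t : I) :
    incl s t = Quot.mk (wedgeRel S I 0) (s, t) := rfl

def NbhdIdx {B : Type u} [TopologicalSpace B] (b : B) : Type u := ({V : Set B // V ∈ 𝓝 b} × ℕ)

instance NbhdIdx.instPreorder {B : Type u} [TopologicalSpace B] (b : B) :
    Preorder (NbhdIdx b) where
  le x y := y.1.1 ⊆ x.1.1 ∧ x.2 ≤ y.2
  lt x y := (y.1.1 ⊆ x.1.1 ∧ x.2 ≤ y.2) ∧ ¬(x.1.1 ⊆ y.1.1 ∧ y.2 ≤ x.2)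
  le_refl x := ⟨subset_rfl, le_rfl⟩
  le_trans a b c h1 h2 := ⟨h2.1.trans h1.1, h1.2.trans h2.2⟩
  lt_iff_le_not_ge a b := Iff.rfl

instance NbhdIdx.instIsDirected {B : Type u} [TopologicalSpace B] (b : B) :
    IsDirected (NbhdIdx b) (· ≤ ·) := ⟨by
  rintro ⟨V, m⟩ ⟨W, n⟩
  exact ⟨(⟨V.1 ∩ W.1, Filter.inter_mem V.2 W.2⟩, max m n),
    ⟨Set.inter_subset_left, le_max_left m n⟩,
    ⟨Set.inter_subset_right, le_max_right m n⟩⟩⟩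

end HedgehogAux

open HedgehogAux

/-- an arc-covering is an arc-hedgehog covering iff path components of
preimages of neighborhoods form a neighborhood basis of the total space. -/
theorem arcHedgehogCovering_iff_basisCondition {E B : Type u} [TopologicalSpace E]
    [TopologicalSpace B] (p : C(E, B)) (hp : IsArcCovering p) :
    IsArcHedgehogCovering.{u} p ↔ HedgehogBasisCondition p := by
  constructor
  · -- hedgehog covering → basis condition
    intro hcov e₀ U hU he₀
    by_contra hcon
    push_neg at hcon
    have hsel : ∀ V : {V : Set B // V ∈ 𝓝 (p e₀)}, ∃ y, JoinedIn (p ⁻¹' V.1) e₀ y ∧ y ∉ U := by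
      intro V
      obtain ⟨y, hy1, hy2⟩ := Set.not_subset.mp (hcon V.1 V.2)
      exact ⟨y, hy1, hy2⟩
    choose y hJ hyU using hsel
    have hwd : ∀ x z : NbhdIdx (p e₀) × I, wedgeRel (NbhdIdx (p e₀)) I 0 x z →
        p ((hJ x.1.1).somePath x.2) = p ((hJ z.1.1).somePath z.2) := by
      rintro x z (rfl | ⟨h1, h2⟩)
      · rfl
      · rw [h1, h2]; simp
    let F : ArcHedgehog (NbhdIdx (p e₀)) → B :=
      Quot.lift (fun x : NbhdIdx (p e₀) × I => p ((hJ x.1.1).somePath x.2)) hwd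
    have hFc : Continuous F := by
      rw [continuous_def]
      intro W hW
      rw [isOpen_hh_iff]
      constructor
      · intro s
        exact hW.preimage ((map_continuous p).comp (hJ s.1).somePath.continuous)
      · rintro ⟨s, hs⟩
        have hpe : p e₀ ∈ W := by
          have hs' : p ((hJ s.1).somePath 0) ∈ W := hs
          simpa using hs'
        refine ⟨(⟨W, hW.mem_nhds hpe⟩, 0), ?_⟩
        rintro ⟨V, n⟩ hlt a
        exact (le_of_lt hlt).1 ((hJ V).somePath_mem a)
    obtain ⟨g, ⟨hg1, hg2⟩, -⟩ := hcov (NbhdIdx (p e₀)) e₀ ⟨F, hFc⟩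
      (Quot.mk _ ((⟨Set.univ, Filter.univ_mem⟩, 0), 0)) (by
        show p ((hJ (⟨Set.univ, Filter.univ_mem⟩ : {V : Set B // V ∈ 𝓝 (p e₀)})).somePath 0) = p e₀
        simp)
    have harc : ∀ s : NbhdIdx (p e₀), ∀ t : I,
        g (Quot.mk _ (s, t)) = (hJ s.1).somePath t := by
      intro s
      have heq : g.comp (incl s) = ((hJ s.1).somePath : C(I, E)) := by
        refine lift_unique_pt hp (f := (ContinuousMap.mk F hFc).comp (incl s))
          (t₀ := 0) ?_ ?_ ?_
        · rw [← ContinuousMap.comp_assoc, hg1]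
        · rfl
        · show g (Quot.mk _ (s, 0)) = _
          rw [mk_zero_eq s ((⟨Set.univ, Filter.univ_mem⟩, 0)), hg2]
          simp
      intro t
      exact ContinuousMap.congr_fun heq t
    have hgU : IsOpen (⇑g ⁻¹' U) := hU.preimage g.continuous
    obtain ⟨t, ht⟩ := (isOpen_hh_iff.mp hgU).2 ⟨(⟨Set.univ, Filter.univ_mem⟩, 0), by
      show g _ ∈ U
      rw [hg2]; exact he₀⟩
    have hlt : t < (t.1, t.2 + 1) := by
      refine lt_iff_le_not_ge.mpr ⟨⟨subset_rfl, Nat.le_succ _⟩, fun h => ?_⟩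
      have := h.2; omega
    have hmem := ht (t.1, t.2 + 1) hlt 1
    change g (Quot.mk _ ((t.1, t.2 + 1), 1)) ∈ U at hmem
    rw [harc (t.1, t.2 + 1) 1] at hmem
    simp only [Path.target] at hmem
    exact hyU t.1 hmem
  · -- basis condition → hedgehog covering
    intro hbasis S _ _ e₀ f z₀ hz
    obtain ⟨⟨s₀, t₀⟩, rfl⟩ := Quot.exists_rep z₀
    have hst : ((f.comp (incl s₀)).comp (segMap t₀ 0)) 0 = p e₀ := by
      simpa using hz
    obtain ⟨δ, ⟨hδ1, hδ2⟩, -⟩ := hp e₀ _ hst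
    have hpec : p (δ 1) = f (Quot.mk _ (s₀, 0)) := by
      have h1 := ContinuousMap.congr_fun hδ1 1
      simpa using h1
    have hstart : ∀ s : S, (f.comp (incl s)) 0 = p (δ 1) := by
      intro s
      rw [ContinuousMap.comp_apply, incl_apply, mk_zero_eq s s₀, hpec]
    choose gs hgs using fun s => hp (δ 1) (f.comp (incl s)) (hstart s)
    have hkey : gs s₀ t₀ = e₀ := by
      have heq : δ = (gs s₀).comp (segMap t₀ 0) := by
        refine lift_unique_pt hp (t₀ := 1) hδ1 ?_ ?_
        · rw [← ContinuousMap.comp_assoc, (hgs s₀).1.1]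
        · show δ 1 = gs s₀ (segMap t₀ 0 1)
          rw [segMap_one, (hgs s₀).1.2]
      have h0 := ContinuousMap.congr_fun heq 0
      rw [hδ2] at h0
      simpa using h0.symm
    have hwd : ∀ x z : S × I, wedgeRel S I 0 x z → gs x.1 x.2 = gs z.1 z.2 := by
      rintro x z (rfl | ⟨h1, h2⟩)
      · rfl
      · rw [h1, h2, (hgs x.1).1.2, (hgs z.1).1.2]
    let G : ArcHedgehog S → E := Quot.lift (fun x : S × I => gs x.1 x.2) hwd
    have hGc : Continuous G := by
      rw [continuous_def]
      intro U hU
      rw [isOpen_hh_iff]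
      refine ⟨fun s => hU.preimage (gs s).continuous, ?_⟩
      rintro ⟨s1, hs1⟩
      have hecU : δ 1 ∈ U := by rw [← (hgs s1).1.2]; exact hs1
      obtain ⟨V, hV, hVsub⟩ := hbasis (δ 1) U hU hecU
      have hfpt : Quot.mk (wedgeRel S I 0) (s₀, 0) ∈ ⇑f ⁻¹' interior V := by
        show f (Quot.mk _ (s₀, 0)) ∈ interior V
        rw [mem_interior_iff_mem_nhds, ← hpec]
        exact hV
      obtain ⟨t, ht⟩ := (isOpen_hh_iff.mp (isOpen_interior.preimage f.continuous)).2 ⟨s₀, hfpt⟩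
      refine ⟨t, fun s hs a => ?_⟩
      apply hVsub
      show JoinedIn (⇑p ⁻¹' V) (δ 1) (gs s a)
      refine ⟨{ toContinuousMap := (gs s).comp (segMap 0 a)
                source' := by show gs s (segMap 0 a 0) = _; rw [segMap_zero, (hgs s).1.2]
                target' := by show gs s (segMap 0 a 1) = _; rw [segMap_one] }, fun u => ?_⟩
      show p (gs s (segMap 0 a u)) ∈ V
      have hthis := ContinuousMap.congr_fun (hgs s).1.1 (segMap 0 a u)
      simp only [ContinuousMap.comp_apply, incl_apply] at hthis
      rw [hthis]
      exact interior_subset (ht s hs (segMap 0 a u))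
    refine ⟨⟨G, hGc⟩, ⟨?_, ?_⟩, ?_⟩
    · ext z
      obtain ⟨x, rfl⟩ := Quot.exists_rep z
      exact ContinuousMap.congr_fun (hgs x.1).1.1 x.2
    · exact hkey
    · rintro g' ⟨hg'1, hg'2⟩
      have h0 : g'.comp (incl s₀) = gs s₀ := by
        refine lift_unique_pt hp (t₀ := t₀) ?_ ((hgs s₀).1.1) ?_
        · rw [← ContinuousMap.comp_assoc, hg'1]
        · show g' (Quot.mk _ (s₀, t₀)) = gs s₀ t₀
          rw [hg'2, hkey]
      have hpt : g' (Quot.mk _ (s₀, 0)) = δ 1 := by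
        have h00 := ContinuousMap.congr_fun h0 0
        rw [(hgs s₀).1.2] at h00
        exact h00
      have harc : ∀ s, g'.comp (incl s) = gs s := by
        intro s
        refine lift_unique_pt hp (t₀ := 0) ?_ ((hgs s).1.1) ?_
        · rw [← ContinuousMap.comp_assoc, hg'1]
        · show g' (Quot.mk _ (s, 0)) = gs s 0
          rw [mk_zero_eq s s₀, hpt, (hgs s).1.2]
      ext z
      obtain ⟨x, rfl⟩ := Quot.exists_rep z
      exact ContinuousMap.congr_fun (harc x.1) x.2
end

section
/- Let p : E → B be a regular arc-hedgehog covering of Peano spaces. Then p is trivial at b₀ (there is a connected neighborhood U of b₀ such that p maps each path component of p⁻¹(U) homeomorphically onto U) if and only if the fiber p⁻¹(b₀) contains an isolated point. -/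
open unitInterval Topology

set_option linter.unnecessarySimpa false

universe u v w

section AuxLemmas

variable {E : Type*} {B : Type*} [TopologicalSpace E] [TopologicalSpace B] {p : C(E, B)}

/-- Lift a path with prescribed starting point. -/
lemma aux_lift (hp : IsArcCovering p) {a b : B} (γ : Path a b) (e₀ : E) (he : p e₀ = a) :
    ∃ (z : E) (δ : Path e₀ z), ∀ t, p (δ t) = γ t := by
  obtain ⟨g, ⟨hg1, hg2⟩, -⟩ := hp e₀ γ.toContinuousMap (by simp [he])
  refine ⟨g 1, ⟨g, hg2, rfl⟩, fun t => ?_⟩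
  have := ContinuousMap.congr_fun hg1 t
  simpa using this

lemma aux_trans {x y z : E} {a b c : B} (δ : Path x y) (δ' : Path y z)
    (γ : Path a b) (γ' : Path b c)
    (h : ∀ t, p (δ t) = γ t) (h' : ∀ t, p (δ' t) = γ' t) :
    ∀ t, p ((δ.trans δ') t) = (γ.trans γ') t := by
  intro t
  rw [Path.trans_apply, Path.trans_apply]
  split_ifs
  · exact h _
  · exact h' _

lemma aux_symm {x y : E} {a b : B} (δ : Path x y) (γ : Path a b)
    (h : ∀ t, p (δ t) = γ t) :
    ∀ t, p (δ.symm t) = γ.symm t := by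
  intro t
  simp only [Path.symm_apply, Function.comp_apply]
  exact h _

/-- The key regularity argument: if the loop `(p∘γ')⁻¹ · (p∘γ)` has a lift which is a loop,
then the lifts `γ` and `γ'` of paths with the same endpoints in `B` end at the same point. -/
lemma aux_key (hreg : IsRegularCovering p) {e' y y' : E} (γ : Path e' y) (γ' : Path e' y')
    (hpy : p y = p y')
    (hloop : ∃ g : C(I, E),
      (∀ t, p (g t) = ((γ'.map p.continuous).symm.trans (γ.map p.continuous)) t) ∧ g 0 = g 1) :
    y = y' := by
  obtain ⟨g, hg, hgl⟩ := hloop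
  set β : Path (p y) (p y) :=
    ((γ'.map p.continuous).symm.trans (γ.map p.continuous)).cast hpy rfl with hβ
  have hβt : ∀ t : I, β t = ((γ'.map p.continuous).symm.trans (γ.map p.continuous)) t := by
    intro t
    rw [hβ]
    exact congrFun (Path.cast_coe _ hpy rfl) t
  have hh : ∀ t, p ((γ'.symm.trans γ).toContinuousMap t) = β t := by
    intro t
    rw [hβt]
    exact aux_trans γ'.symm γ (γ'.map p.continuous).symm (γ.map p.continuous)
      (aux_symm γ' (γ'.map p.continuous) (fun s => by simp [Path.map_coe]))
      (fun s => by simp [Path.map_coe]) t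
  have h2 := hreg (p y) β g (γ'.symm.trans γ).toContinuousMap
    (fun t => (hg t).trans (hβt t).symm) hh hgl
  simpa using h2.symm

/-- Surjectivity of `p` from a path component of `p⁻¹(U)` onto a path-connected `U`. -/
lemma aux_surj (hp : IsArcCovering p) {U : Set B} (hU : IsPathConnected U)
    (e' : E) (he' : p e' ∈ U) :
    ∀ u ∈ U, ∃ w, JoinedIn (p ⁻¹' U) e' w ∧ p w = u := by
  intro u hu
  obtain ⟨τ, hτ⟩ := hU.joinedIn (p e') he' u hu
  obtain ⟨z, δ, hδ⟩ := aux_lift hp τ e' rfl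
  refine ⟨z, ⟨δ, fun t => ?_⟩, ?_⟩
  · rw [Set.mem_preimage, hδ t]; exact hτ t
  · have := hδ 1; simpa using this

/-- Base injectivity: if the path component of `e` in `p⁻¹(U)` meets the fiber of `p e`
only in `e`, then `p` is injective on it. -/
lemma aux_injOn_base (hp : IsArcCovering p) (hreg : IsRegularCovering p) (U : Set B) (e : E)
    (hiso : ∀ z, JoinedIn (p ⁻¹' U) e z → p z = p e → z = e) :
    Set.InjOn p {y | JoinedIn (p ⁻¹' U) e y} := by
  intro y hy y' hy' hpy
  obtain ⟨γ, hγ⟩ := (hy : JoinedIn _ _ _)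
  obtain ⟨γ', hγ'⟩ := (hy' : JoinedIn _ _ _)
  obtain ⟨z, δ₁, hδ₁⟩ := aux_lift hp (γ'.map p.continuous).symm y (by simpa using hpy)
  have hδ₁U : ∀ t, δ₁ t ∈ p ⁻¹' U := by
    intro t
    rw [Set.mem_preimage, hδ₁ t]
    simp only [Path.symm_apply, Function.comp_apply, Path.map_coe]
    exact hγ' _
  have hz : p z = p e := by
    have := hδ₁ 1
    simpa using this
  have hjy : JoinedIn (p ⁻¹' U) e y := ⟨γ, hγ⟩
  have hze : z = e := hiso z (hjy.trans ⟨δ₁, hδ₁U⟩) hz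
  subst hze
  refine aux_key hreg γ γ' hpy ⟨(δ₁.trans γ).toContinuousMap, fun t => ?_, by simp⟩
  exact aux_trans δ₁ γ (γ'.map p.continuous).symm (γ.map p.continuous)
    hδ₁ (fun s => by simp [Path.map_coe]) t

/-- Injectivity transfer: if `p` is injective on the component of `e` and surjective onto `U`
from it, then `p` is injective on each path component of `p⁻¹(U)`. -/
lemma aux_injOn_gen (hp : IsArcCovering p) (hreg : IsRegularCovering p) (U : Set B) (e : E)
    (hinj : Set.InjOn p {y | JoinedIn (p ⁻¹' U) e y})
    (hsurj : ∀ u ∈ U, ∃ w, JoinedIn (p ⁻¹' U) e w ∧ p w = u)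
    (e' : E) :
    Set.InjOn p {y | JoinedIn (p ⁻¹' U) e' y} := by
  intro y hy y' hy' hpy
  obtain ⟨γ, hγ⟩ := (hy : JoinedIn _ _ _)
  obtain ⟨γ', hγ'⟩ := (hy' : JoinedIn _ _ _)
  have hjy : JoinedIn (p ⁻¹' U) e' y := ⟨γ, hγ⟩
  have hyU : p y ∈ U := hjy.target_mem
  obtain ⟨w, hwC, hpw⟩ := hsurj (p y) hyU
  obtain ⟨w₂, δ₁, hδ₁⟩ := aux_lift hp (γ'.map p.continuous).symm w
    (by simpa using hpw.trans hpy)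
  have hδ₁U : ∀ t, δ₁ t ∈ p ⁻¹' U := by
    intro t
    rw [Set.mem_preimage, hδ₁ t]
    simp only [Path.symm_apply, Function.comp_apply, Path.map_coe]
    exact hγ' _
  have hw₂ : p w₂ = p e' := by
    have := hδ₁ 1
    simpa using this
  obtain ⟨w₃, δ₂, hδ₂⟩ := aux_lift hp (γ.map p.continuous) w₂ (by simpa using hw₂)
  have hδ₂U : ∀ t, δ₂ t ∈ p ⁻¹' U := by
    intro t
    rw [Set.mem_preimage, hδ₂ t]
    simp only [Path.map_coe, Function.comp_apply]
    exact hγ _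
  have hw₃ : p w₃ = p w := by
    have h1 := hδ₂ 1
    simp only [Path.target, Path.map_coe, Function.comp_apply] at h1
    rw [h1, hpw]
  have hw₃C : JoinedIn (p ⁻¹' U) e w₃ := (hwC.trans ⟨δ₁, hδ₁U⟩).trans ⟨δ₂, hδ₂U⟩
  have hww : w₃ = w := hinj hw₃C hwC hw₃
  subst hww
  refine aux_key hreg γ γ' hpy ⟨(δ₁.trans δ₂).toContinuousMap, fun t => ?_, by simp⟩
  exact aux_trans δ₁ δ₂ (γ'.map p.continuous).symm (γ.map p.continuous) hδ₁ hδ₂ t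

/-- Construction of the trivializing homeomorphism on a path component. -/
lemma aux_homeo [LocallyPathConnectedSpace B] (hp : IsArcCovering p)
    (hbasis : HedgehogBasisCondition p)
    {U : Set B} (hUo : IsOpen U) (hUpc : IsPathConnected U) (e' : E) (he' : p e' ∈ U)
    (hinj : Set.InjOn p {y | JoinedIn (p ⁻¹' U) e' y}) :
    ∃ h : ↥{y : E | JoinedIn (p ⁻¹' U) e' y} ≃ₜ ↥U, ∀ z, (h z : B) = p (z : E) := by
  set C : Set E := {y | JoinedIn (p ⁻¹' U) e' y} with hC
  have hmemU : ∀ y : C, p (y : E) ∈ U := fun y => y.2.target_mem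
  let f : C → U := fun y => ⟨p y, hmemU y⟩
  have hcont : Continuous f :=
    Continuous.subtype_mk (p.continuous.comp continuous_subtype_val) _
  have hbij : Function.Bijective f := by
    constructor
    · intro a b hab
      exact Subtype.ext (hinj a.2 b.2 (congrArg Subtype.val hab))
    · rintro ⟨u, hu⟩
      obtain ⟨w, hwC, hpw⟩ := aux_surj hp hUpc e' he' u hu
      exact ⟨⟨w, hwC⟩, Subtype.ext hpw⟩
  have hopen : IsOpenMap f := by
    intro O' hO'
    obtain ⟨O, hO, rfl⟩ := isOpen_induced_iff.mp hO'
    rw [isOpen_iff_forall_mem_open]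
    rintro ⟨u, huU⟩ ⟨⟨y, hyC⟩, hyO, hfy⟩
    have hpyu : p y = u := congrArg Subtype.val hfy
    obtain ⟨V', hV'n, hV'sub⟩ := hbasis y O hO hyO
    have hpyV : p y ∈ interior V' ∩ U :=
      ⟨mem_interior_iff_mem_nhds.2 hV'n, hyC.target_mem⟩
    refine ⟨Subtype.val ⁻¹' pathComponentIn (interior V' ∩ U) (p y), ?_, ?_, ?_⟩
    · rintro ⟨u', hu'U⟩ hu'N
      obtain ⟨τ, hτ⟩ := (hu'N : JoinedIn _ (p y) u')
      obtain ⟨z, δ, hδ⟩ := aux_lift hp τ y rfl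
      have hδU : ∀ t, δ t ∈ p ⁻¹' U := fun t => by
        rw [Set.mem_preimage, hδ t]; exact (hτ t).2
      have hδV : ∀ t, δ t ∈ p ⁻¹' V' := fun t => by
        rw [Set.mem_preimage, hδ t]; exact interior_subset (hτ t).1
      have hzC : z ∈ C := hyC.trans ⟨δ, hδU⟩
      have hzO : z ∈ O := hV'sub (⟨δ, hδV⟩ : JoinedIn _ y z)
      have hpz : p z = u' := by have := hδ 1; simpa using this
      exact ⟨⟨z, hzC⟩, hzO, Subtype.ext hpz⟩
    · exact (IsOpen.pathComponentIn (isOpen_interior.inter hUo) _).preimage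
        continuous_subtype_val
    · exact Set.mem_preimage.2 (hpyu ▸ mem_pathComponentIn_self hpyV)
  exact ⟨Equiv.toHomeomorphOfContinuousOpen (Equiv.ofBijective f hbij) hcont hopen,
    fun z => rfl⟩

end AuxLemmas

/-- a regular arc-hedgehog covering of Peano spaces is trivial at `b₀`
iff the fiber over `b₀` has an isolated point. -/
theorem trivial_iff_isolated_point {E B : Type*} [TopologicalSpace E] [TopologicalSpace B]
    [ConnectedSpace E] [LocallyPathConnectedSpace E] [ConnectedSpace B]
    [LocallyPathConnectedSpace B]
    (p : C(E, B)) (hp : IsArcCovering p) (hbasis : HedgehogBasisCondition p)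
    (hreg : IsRegularCovering p) (b₀ : B) :
    (∃ U ∈ nhds b₀, IsConnected U ∧ ∀ e : E, p e ∈ U →
      ∃ h : ↥{y : E | JoinedIn (p ⁻¹' U) e y} ≃ₜ ↥U, ∀ z, (h z : B) = p (z : E)) ↔
    (∃ e : E, p e = b₀ ∧ ∃ V : Set E, IsOpen V ∧ V ∩ p ⁻¹' {b₀} = {e}) := by
  constructor
  · rintro ⟨U, hUn, hUconn, hU⟩
    have hB : PathConnectedSpace B := pathConnectedSpace_iff_connectedSpace.2 ‹_›
    obtain ⟨e₁⟩ : Nonempty E := inferInstance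
    obtain ⟨τ⟩ := PathConnectedSpace.joined (p e₁) b₀
    obtain ⟨e, δ, hδ⟩ := aux_lift hp τ e₁ rfl
    have hpe : p e = b₀ := by have := hδ 1; simpa using this
    have heU : p e ∈ U := hpe ▸ mem_of_mem_nhds hUn
    obtain ⟨h, hh⟩ := hU e heU
    have hinj : Set.InjOn p {y | JoinedIn (p ⁻¹' U) e y} := by
      intro a ha b hb hab
      have h1 : h ⟨a, ha⟩ = h ⟨b, hb⟩ := Subtype.ext (by rw [hh, hh]; exact hab)
      exact congrArg Subtype.val (h.injective h1)
    refine ⟨e, hpe, pathComponentIn (p ⁻¹' interior U) e, ?_, ?_⟩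
    · exact IsOpen.pathComponentIn (isOpen_interior.preimage p.continuous) _
    · apply Set.eq_singleton_iff_unique_mem.2
      have heInt : e ∈ p ⁻¹' interior U := by
        rw [Set.mem_preimage, hpe]
        exact mem_interior_iff_mem_nhds.2 hUn
      refine ⟨⟨mem_pathComponentIn_self heInt, by simp [hpe]⟩, ?_⟩
      rintro z ⟨hz1, hz2⟩
      have hzC : JoinedIn (p ⁻¹' U) e z :=
        (hz1 : JoinedIn _ _ _).mono (Set.preimage_mono interior_subset)
      have hpz : p z = p e := by
        rw [hpe]
        exact hz2
      exact hinj hzC (JoinedIn.refl heU) hpz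
  · rintro ⟨e, hpe, V, hVo, hVfib⟩
    have heV : e ∈ V := by
      have h1 : e ∈ ({e} : Set E) := rfl
      rw [← hVfib] at h1
      exact h1.1
    obtain ⟨W, hWn, hWsub⟩ := hbasis e V hVo heV
    rw [hpe] at hWn
    have hb₀W : b₀ ∈ interior W := mem_interior_iff_mem_nhds.2 hWn
    set U := pathComponentIn (interior W) b₀ with hUdef
    have hUo : IsOpen U := IsOpen.pathComponentIn isOpen_interior _
    have hUb : b₀ ∈ U := mem_pathComponentIn_self hb₀W
    have hUpc : IsPathConnected U := isPathConnected_pathComponentIn hb₀W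
    have hUW : U ⊆ W := pathComponentIn_subset.trans interior_subset
    have heU : p e ∈ U := hpe ▸ hUb
    have hiso : ∀ z, JoinedIn (p ⁻¹' U) e z → p z = p e → z = e := by
      intro z hz hpz
      have hzV : z ∈ V := hWsub (hz.mono (Set.preimage_mono hUW))
      have h1 : z ∈ V ∩ p ⁻¹' {b₀} := ⟨hzV, by rw [Set.mem_preimage, hpz, hpe]; rfl⟩
      rw [hVfib] at h1
      exact h1
    have hinj := aux_injOn_base hp hreg U e hiso
    have hsurj := aux_surj hp hUpc e heU
    refine ⟨U, hUo.mem_nhds hUb, hUpc.isConnected, fun e' he' => ?_⟩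
    exact aux_homeo hp hbasis hUo hUpc e' he' (aux_injOn_gen hp hreg U e hinj hsurj e')
end
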